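/- Let ℙ and ℚ be stationary probability measures on Ω with ℚ ergodic. If there exists k ∈ ℕ and a ∈ 𝒜^k with ℚ[a] > 0 and ℙ[a] = 0, then for ℚ-almost every y and every x ∈ supp ℙ one has liminf_{N→∞} c_N(y|x)/N > 0, and consequently Q̂_N(y,x) → ∞ as N → ∞. -/

import Mathlib

open MeasureTheory Filter Asymptotics
open scoped ENNReal Classical

noncomputable section

namespace ZM

/-- The left shift on one-sided sequences. -/
def shift {A : Type*} (x : ℕ → A) : ℕ → A := fun k => x (k + 1)

/-- The cylinder set of all sequences starting with the word `a`. -/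
def cyl {A : Type*} {n : ℕ} (a : Fin n → A) : Set (ℕ → A) := {x | ∀ i : Fin n, x i = a i}

/-- The word `x_{p+1}^{p+ℓ}` of `x` (0-based: the letters at positions `p, …, p+ℓ-1`). -/
def seg {A : Type*} (y : ℕ → A) (p ℓ : ℕ) : Fin ℓ → A := fun i => y (p + i)

/-- `w` occurs in `x` at (0-based) offset `r`. -/
def matchAt {A : Type*} (x : ℕ → A) {ℓ : ℕ} (w : Fin ℓ → A) (r : ℕ) : Prop :=
  ∀ i : Fin ℓ, x (r + i) = w i

/-- `w` appears as a substring of `x_1^N`. -/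
def appears {A : Type*} (N : ℕ) (x : ℕ → A) {ℓ : ℕ} (w : Fin ℓ → A) : Prop :=
  ∃ r, r + ℓ ≤ N ∧ matchAt x w r

/-- The waiting time `W_ℓ(w, x)`: the least (1-based) position at which `w` occurs in `x`,
`⊤` if `w` never occurs. -/
def W {A : Type*} {ℓ : ℕ} (w : Fin ℓ → A) (x : ℕ → A) : ℕ∞ :=
  sInf {r : ℕ∞ | ∃ n : ℕ, r = (n : ℕ∞) ∧ 1 ≤ n ∧ matchAt x w (n - 1)}

section ZMparsing

variable {A : Type*}

/-- Length of the Ziv–Merhav word starting at (0-based) position `p` of `y_1^N`, with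
database `x_1^N`: the longest prefix of the remaining portion of `y_1^N` appearing as a
substring of `x_1^N`, or a single letter if there is no such prefix. -/
def zmLen (N : ℕ) (x y : ℕ → A) (p : ℕ) : ℕ :=
  max 1 (sSup {ℓ | p + ℓ ≤ N ∧ appears N x (seg y p ℓ)})

/-- Starting position of the `j`-th (0-based) word of the Ziv–Merhav parsing. -/
def zmPos (N : ℕ) (x y : ℕ → A) : ℕ → ℕ
  | 0 => 0
  | j + 1 => zmPos N x y j + zmLen N x y (zmPos N x y j)

/-- `c_N(y|x)`: the number of words in the Ziv–Merhav parsing of `y_1^N` w.r.t. `x_1^N`. -/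
def cN (N : ℕ) (x y : ℕ → A) : ℕ := sInf {c | N ≤ zmPos N x y c}

/-- The Ziv–Merhav estimator `Q̂_N(y, x) = c_N(y|x) ln N / N`. -/
def ZMest (N : ℕ) (x y : ℕ → A) : ℝ := (cN N x y : ℝ) * Real.log N / N

end ZMparsing

section MeasureDefs

variable {A : Type*} [MeasurableSpace A]

/-- The measure of the cylinder of a word, as a real number. -/
def wp (μ : Measure (ℕ → A)) {n : ℕ} (a : Fin n → A) : ℝ := (μ (cyl a)).toReal

/-- `supp ℙ`: the set of sequences all of whose prefixes have positive measure. -/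
def suppSet (μ : Measure (ℕ → A)) : Set (ℕ → A) := {x | ∀ n, 0 < μ (cyl (seg x 0 n))}

/-- Condition (ID): immediate decoupling on the support, with sequence `k`. -/
def CondID (μ : Measure (ℕ → A)) (k : ℕ → ℝ) : Prop :=
  Monotone k ∧ (k =o[atTop] fun n => (n : ℝ)) ∧
    ∀ (n m : ℕ) (a : Fin n → A) (b : Fin m → A), 0 < μ (cyl a) → 0 < μ (cyl b) →
      wp μ (Fin.append a b) ≤ Real.exp (k n) * (wp μ a * wp μ b) ∧
      (0 < μ (cyl (Fin.append a b)) →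
        Real.exp (-k n) * (wp μ a * wp μ b) ≤ wp μ (Fin.append a b))

/-- Condition (FE): fast enough decay, with rate `γp < 0`. -/
def CondFE (μ : Measure (ℕ → A)) (γp : ℝ) : Prop :=
  γp < 0 ∧ ∀ᶠ n : ℕ in atTop, ∀ a : Fin n → A, 0 < μ (cyl a) → wp μ a ≤ Real.exp (γp * n)

/-- Condition (SE): slow enough decay, with rate `γm < 0`. -/
def CondSE (μ : Measure (ℕ → A)) (γm : ℝ) : Prop :=
  γm < 0 ∧ ∀ᶠ n : ℕ in atTop, ∀ a : Fin n → A, 0 < μ (cyl a) → Real.exp (γm * n) ≤ wp μ a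

/-- Condition (KB): Kontoyiannis' bound on waiting times, with sequences `k`, `τ`. -/
def CondKB (μ : Measure (ℕ → A)) (k τ : ℕ → ℝ) : Prop :=
  (k =o[atTop] fun n => (n : ℝ)) ∧ (τ =o[atTop] fun n => (n : ℝ)) ∧
    ∀ (ℓ : ℕ) (a : Fin ℓ → A) (r : ℕ),
      (μ {x | (r : ℕ∞) ≤ W a x}).toReal ≤
        Real.exp (-(Real.exp (-k ℓ) * wp μ a * (⌊((r : ℝ) - 1) / ((ℓ : ℝ) + τ ℓ)⌋ : ℝ)))

/-- Length of the next word of the auxiliary parsing of `y_1^N` starting at position `p`: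
the shortest prefix of the remaining portion of `y_1^N` with measure at most `θ`, or the
whole remaining portion if there is no such prefix. -/
def auxLen (μ : Measure (ℕ → A)) (θ : ℝ) (N : ℕ) (y : ℕ → A) (p : ℕ) : ℕ :=
  if ∃ ℓ, 1 ≤ ℓ ∧ p + ℓ ≤ N ∧ wp μ (seg y p ℓ) ≤ θ then
    sInf {ℓ | 1 ≤ ℓ ∧ p + ℓ ≤ N ∧ wp μ (seg y p ℓ) ≤ θ}
  else N - p

/-- Starting position of the `j`-th (0-based) word of the auxiliary parsing. -/
def auxPos (μ : Measure (ℕ → A)) (θ : ℝ) (N : ℕ) (y : ℕ → A) : ℕ → ℕ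
  | 0 => 0
  | j + 1 => auxPos μ θ N y j + max 1 (auxLen μ θ N y (auxPos μ θ N y j))

/-- Length of the `j`-th (0-based) word of the auxiliary parsing. -/
def auxWordLen (μ : Measure (ℕ → A)) (θ : ℝ) (N : ℕ) (y : ℕ → A) (j : ℕ) : ℕ :=
  max 1 (auxLen μ θ N y (auxPos μ θ N y j))

/-- The number of words in the auxiliary parsing of `y_1^N`. -/
def auxCount (μ : Measure (ℕ → A)) (θ : ℝ) (N : ℕ) (y : ℕ → A) : ℕ :=
  sInf {c | N ≤ auxPos μ θ N y c}

/-- Length of the next word of the block parsing within a block ending at position `e`: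
the shortest prefix of the remaining portion of the block with measure at most `θ`;
`0` encodes that no such prefix exists (the rest of the block is the buffer). -/
def blkLen (μ : Measure (ℕ → A)) (θ : ℝ) (e : ℕ) (y : ℕ → A) (p : ℕ) : ℕ :=
  sInf {ℓ | 1 ≤ ℓ ∧ p + ℓ ≤ e ∧ wp μ (seg y p ℓ) ≤ θ}

/-- Starting position of the `i`-th (0-based) word of the block starting at `q`, ending at `e`. -/
def blkPos (μ : Measure (ℕ → A)) (θ : ℝ) (e : ℕ) (y : ℕ → A) (q : ℕ) : ℕ → ℕ
  | 0 => q
  | i + 1 => blkPos μ θ e y q i + blkLen μ θ e y (blkPos μ θ e y q i)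

/-- Number `d_s` of words in the block starting at `q` and ending at `e`. -/
def dCount (μ : Measure (ℕ → A)) (θ : ℝ) (e : ℕ) (y : ℕ → A) (q : ℕ) : ℕ :=
  sInf {i | blkLen μ θ e y (blkPos μ θ e y q i) = 0}

/-- The block starting at `q` and ending at `e` is good: its parsed words are pairwise
distinct. -/
def GoodBlock (μ : Measure (ℕ → A)) (θ : ℝ) (e : ℕ) (y : ℕ → A) (q : ℕ) : Prop :=
  ∀ i j : ℕ, i < dCount μ θ e y q → j < dCount μ θ e y q →
    blkLen μ θ e y (blkPos μ θ e y q i) = blkLen μ θ e y (blkPos μ θ e y q j) →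
    (∀ t < blkLen μ θ e y (blkPos μ θ e y q i),
      y (blkPos μ θ e y q i + t) = y (blkPos μ θ e y q j + t)) →
    i = j

end MeasureDefs

/-- The block length `⌊N^α⌋`. -/
def blockB (N : ℕ) (α : ℝ) : ℕ := ⌊(N : ℝ) ^ α⌋₊

/-- The number `M_N` of blocks. -/
def blockM (N : ℕ) (α : ℝ) : ℕ := (N + blockB N α - 1) / blockB N α

/-- The starting position of the `s`-th (0-based) block. -/
def blockStart (N : ℕ) (α : ℝ) (s : ℕ) : ℕ := s * blockB N α

/-- The end position of the `s`-th (0-based) block. -/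
def blockEnd (N : ℕ) (α : ℝ) (s : ℕ) : ℕ := min ((s + 1) * blockB N α) N

/-- `S_b(y_1^N)`: the set of bad blocks of the block auxiliary parsing (with threshold
`N^{-1-ε}`, word probabilities computed with `μ`). -/
def badSet {A : Type*} [MeasurableSpace A] (μ : Measure (ℕ → A)) (N : ℕ) (α ε : ℝ)
    (y : ℕ → A) : Set ℕ :=
  {s | s < blockM N α ∧
    ¬ GoodBlock μ ((N : ℝ) ^ (-1 - ε)) (blockEnd N α s) y (blockStart N α s)}

/-- `ℓ₋ = ln N / (-2 γ₋)`. -/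
def ellMinus (N : ℕ) (γm : ℝ) : ℝ := Real.log N / (-2 * γm)

/-- `ℓ₊ = 2 ln N / (-γ₊)`. -/
def ellPlus (N : ℕ) (γp : ℝ) : ℝ := 2 * Real.log N / (-γp)

/-- `d₊ = 2 N^α / ℓ₋`. -/
def dPlus (N : ℕ) (α γm : ℝ) : ℝ := 2 * (N : ℝ) ^ α / ellMinus N γm

section CrossEntropy

variable {A : Type*} [MeasurableSpace A] [Fintype A]

/-- The `n`-th cross-entropy average `-(1/n) ∑_{a ∈ 𝒜ⁿ} ℚ[a] ln ℙ[a]`, real-valued version. -/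
def hcSeq (μP μQ : Measure (ℕ → A)) (n : ℕ) : ℝ :=
  -(1 / (n : ℝ)) * ∑ a : Fin n → A, wp μQ a * Real.log (wp μP a)

/-- `-ln p` as an element of `[0, ∞]`, for `p ∈ [0, 1]`; equals `⊤` when `p = 0`. -/
def negLog (p : ℝ≥0∞) : ℝ≥0∞ := if p = 0 then ⊤ else ENNReal.ofReal (-Real.log p.toReal)

/-- The `n`-th cross-entropy average, `[0, ∞]`-valued version. -/
def hcSeqE (μP μQ : Measure (ℕ → A)) (n : ℕ) : ℝ≥0∞ :=
  (∑ a : Fin n → A, μQ (cyl a) * negLog (μP (cyl a))) / (n : ℝ≥0∞)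

end CrossEntropy

end ZM

namespace ZMAux

open scoped Topology

set_option linter.unusedSectionVars false

variable {Ω : Type*} [MeasurableSpace Ω]

/-- Birkhoff-type occurrence count, `ℝ≥0∞`-valued. -/
def SS (E : Set Ω) (T : Ω → Ω) (N : ℕ) (y : Ω) : ℝ≥0∞ :=
  ∑ p ∈ Finset.range N, E.indicator 1 (T^[p] y)

lemma ind_le_one (E : Set Ω) (z : Ω) : E.indicator (1 : Ω → ℝ≥0∞) z ≤ 1 := by
  classical
  rw [Set.indicator_apply]; split_ifs <;> simp

lemma SS_mono (E : Set Ω) (T : Ω → Ω) {m n : ℕ} (h : m ≤ n) (y : Ω) :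
    SS E T m y ≤ SS E T n y :=
  Finset.sum_le_sum_of_subset (Finset.range_subset_range.2 h)

lemma SS_add (E : Set Ω) (T : Ω → Ω) (m n : ℕ) (y : Ω) :
    SS E T (m + n) y = SS E T m y + SS E T n (T^[m] y) := by
  unfold SS
  rw [Finset.sum_range_add]
  congr 1
  refine Finset.sum_congr rfl fun j _ => ?_
  rw [add_comm m j, Function.iterate_add_apply]

lemma SS_one (E : Set Ω) (T : Ω → Ω) (y : Ω) : SS E T 1 y = E.indicator 1 y := by
  simp [SS]

lemma SS_succ' (E : Set Ω) (T : Ω → Ω) (n : ℕ) (y : Ω) :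
    SS E T (n + 1) y = E.indicator 1 y + SS E T n (T y) := by
  have h := SS_add E T 1 n y
  rw [add_comm 1 n] at h
  rw [h, SS_one]
  simp

lemma SS_le (E : Set Ω) (T : Ω → Ω) (n : ℕ) (y : Ω) : SS E T n y ≤ n := by
  calc SS E T n y ≤ ∑ _p ∈ Finset.range n, 1 :=
        Finset.sum_le_sum fun p _ => ind_le_one E _
    _ = n := by simp

lemma measurable_SS {E : Set Ω} {T : Ω → Ω} (hT : Measurable T) (hEm : MeasurableSet E)
    (N : ℕ) : Measurable (SS E T N) :=
  Finset.measurable_sum _ fun p _ =>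
    ((measurable_const.indicator hEm).comp (hT.iterate p))

lemma lintegral_SS {μ : Measure Ω} {E : Set Ω} {T : Ω → Ω}
    (hT : MeasurePreserving T μ μ) (hEm : MeasurableSet E) (N : ℕ) :
    ∫⁻ y, SS E T N y ∂μ = N * μ E := by
  have hmeas : ∀ p : ℕ, Measurable fun y => E.indicator (1 : Ω → ℝ≥0∞) (T^[p] y) :=
    fun p => (measurable_const.indicator hEm).comp (hT.measurable.iterate p)
  unfold SS
  rw [lintegral_finset_sum _ fun p _ => hmeas p]
  have h : ∀ p, ∫⁻ y, E.indicator (1 : Ω → ℝ≥0∞) (T^[p] y) ∂μ = μ E := by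
    intro p
    have hcomp : ∫⁻ y, E.indicator (1 : Ω → ℝ≥0∞) (T^[p] y) ∂μ =
        ∫⁻ z, E.indicator (1 : Ω → ℝ≥0∞) z ∂μ :=
      (hT.iterate p).lintegral_comp (measurable_const.indicator hEm)
    rw [hcomp, lintegral_indicator_one hEm]
  simp only [h, Finset.sum_const, Finset.card_range, nsmul_eq_mul]

/-- Positions of the greedy orbit decomposition. -/
def orbPos (T : Ω → Ω) (len : Ω → ℕ) (y : Ω) : ℕ → ℕ
  | 0 => 0
  | i + 1 => orbPos T len y i + len (T^[orbPos T len y i] y)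

lemma orbPos_ge (T : Ω → Ω) {len : Ω → ℕ} (h1 : ∀ z, 1 ≤ len z) (y : Ω) :
    ∀ i, i ≤ orbPos T len y i := by
  intro i
  induction i with
  | zero => simp [orbPos]
  | succ i ih => have := h1 (T^[orbPos T len y i] y); simp only [orbPos]; omega

/-- The Katznelson–Weiss integrated bound. -/
lemma KW_bound {μ : Measure Ω} {T : Ω → Ω} [IsProbabilityMeasure μ]
    (hT : MeasurePreserving T μ μ) {E B : Set Ω} (hEm : MeasurableSet E)
    (hBm : MeasurableSet B) (ε : ℝ≥0∞) (M : ℕ) (len : Ω → ℕ)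
    (hlen1 : ∀ z, 1 ≤ len z) (hlenM : ∀ z, len z ≤ M)
    (hblock : ∀ z, SS E T (len z) z ≤ ε * (len z) + SS B T 1 z) (N : ℕ) :
    (N : ℝ≥0∞) * μ E ≤ ε * ((N + M : ℕ) : ℝ≥0∞) + ((N + M : ℕ) : ℝ≥0∞) * μ B := by
  have hkey : ∀ y i, SS E T (orbPos T len y i) y ≤
      ε * (orbPos T len y i) + SS B T (orbPos T len y i) y := by
    intro y i
    induction i with
    | zero => simp [orbPos, SS]
    | succ i ih =>
      have hstep : orbPos T len y (i + 1) =
          orbPos T len y i + len (T^[orbPos T len y i] y) := rfl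
      set P := orbPos T len y i with hP
      set z := T^[P] y with hz
      set L := len z with hL
      rw [hstep, SS_add E T P L y, SS_add B T P L y]
      have hb := hblock z
      have hind : SS B T 1 z ≤ SS B T L z := SS_mono _ _ (hlen1 z) z
      calc SS E T P y + SS E T L z
          ≤ (ε * P + SS B T P y) + (ε * L + SS B T 1 z) := add_le_add ih hb
        _ ≤ (ε * P + SS B T P y) + (ε * L + SS B T L z) :=
            add_le_add le_rfl (add_le_add le_rfl hind)
        _ = ε * ((P : ℝ≥0∞) + L) + (SS B T P y + SS B T L z) := by ring
        _ = ε * ((P + L : ℕ) : ℝ≥0∞) + (SS B T P y + SS B T L z) := by push_cast; ring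
  have hN : ∀ y, SS E T N y ≤ ε * ((N + M : ℕ) : ℝ≥0∞) + SS B T (N + M) y := by
    intro y
    have hne : {i | N ≤ orbPos T len y i}.Nonempty := ⟨N, orbPos_ge T hlen1 y N⟩
    obtain ⟨I, hImem, hImin⟩ : ∃ I, N ≤ orbPos T len y I ∧
        ∀ j < I, ¬ N ≤ orbPos T len y j :=
      ⟨sInf {i | N ≤ orbPos T len y i}, Nat.sInf_mem hne,
        fun j hj => Nat.notMem_of_lt_sInf (s := {i | N ≤ orbPos T len y i}) hj⟩
    have hIle : orbPos T len y I ≤ N + M := by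
      rcases Nat.eq_zero_or_pos I with h0 | hpos
      · rw [h0]; simp [orbPos]
      · have hJ := hImin (I - 1) (by omega)
        have hs : orbPos T len y (I - 1 + 1) =
            orbPos T len y (I - 1) + len (T^[orbPos T len y (I - 1)] y) := rfl
        have hl := hlenM (T^[orbPos T len y (I - 1)] y)
        have hII : I - 1 + 1 = I := by omega
        rw [hII] at hs
        omega
    have hcast : ((orbPos T len y I : ℕ) : ℝ≥0∞) ≤ ((N + M : ℕ) : ℝ≥0∞) := by
      exact_mod_cast hIle
    calc SS E T N y ≤ SS E T (orbPos T len y I) y := SS_mono _ _ hImem y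
      _ ≤ ε * (orbPos T len y I) + SS B T (orbPos T len y I) y := hkey y I
      _ ≤ ε * ((N + M : ℕ) : ℝ≥0∞) + SS B T (N + M) y :=
          add_le_add (mul_le_mul_right hcast ε) (SS_mono _ _ hIle y)
  have h1 : ∫⁻ y, SS E T N y ∂μ = N * μ E := lintegral_SS hT hEm N
  have h2 : ∫⁻ y, (ε * ((N + M : ℕ) : ℝ≥0∞) + SS B T (N + M) y) ∂μ =
      ε * ((N + M : ℕ) : ℝ≥0∞) + ((N + M : ℕ) : ℝ≥0∞) * μ B := by
    rw [lintegral_add_left measurable_const, lintegral_SS hT hBm (N + M)]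
    simp
  rw [← h1, ← h2]
  exact lintegral_mono fun y => hN y

/-- Katznelson–Weiss style positive lower density for ergodic maps. -/
theorem ergodic_density {T : Ω → Ω} {μ : Measure Ω} [IsProbabilityMeasure μ]
    (hT : Ergodic T μ) {E : Set Ω} (hEm : MeasurableSet E) (hE : 0 < μ E) :
    ∀ᵐ y ∂μ, 0 < atTop.liminf (fun N => SS E T N y / N) := by
  classical
  have hTm : Measurable T := hT.toMeasurePreserving.measurable
  set φ : Ω → ℝ≥0∞ := fun y => atTop.liminf (fun N => SS E T N y / N) with hφdef
  have hφm : Measurable φ :=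
    Measurable.liminf fun N => (measurable_SS hTm hEm N).div measurable_const
  have haux1 : ∀ y, φ y = 0 → ∀ ε : ℝ≥0∞, 0 < ε → ∀ a : ℕ,
      ∃ N, a ≤ N ∧ 1 ≤ N ∧ SS E T N y < ε * N := by
    intro y h0 ε hε a
    have hlt : φ y < ε := lt_of_le_of_lt (le_of_eq h0) hε
    have hfr := frequently_lt_of_liminf_lt (h := hlt)
    obtain ⟨N, hN, hNa⟩ := (hfr.and_eventually (eventually_ge_atTop (max a 1))).exists
    refine ⟨N, le_trans (le_max_left _ _) hNa, le_trans (le_max_right _ _) hNa, ?_⟩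
    have hN0 : (N : ℝ≥0∞) ≠ 0 := by
      simpa using (by omega : N ≠ 0)
    exact (ENNReal.div_lt_iff (Or.inl hN0) (Or.inl (ENNReal.natCast_ne_top N))).1 hN
  have haux2 : ∀ y, (∀ ε : ℝ≥0∞, 0 < ε → ε ≠ ⊤ → ∀ a : ℕ,
      ∃ N, a ≤ N ∧ 1 ≤ N ∧ SS E T N y ≤ ε * N) → φ y = 0 := by
    intro y hfr
    refine le_antisymm ?_ zero_le
    refine ENNReal.le_of_forall_pos_le_add fun ε hε _ => ?_
    rw [zero_add]
    refine liminf_le_of_frequently_le ?_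
    rw [frequently_atTop]
    intro a
    obtain ⟨N, hNa, hN1, hle⟩ := hfr ε (by exact_mod_cast hε) ENNReal.coe_ne_top a
    refine ⟨N, hNa, ?_⟩
    have hN0 : (N : ℝ≥0∞) ≠ 0 := by simpa using (by omega : N ≠ 0)
    calc SS E T N y / N ≤ (ε : ℝ≥0∞) * N / N := ENNReal.div_le_div_right hle _
      _ = ε * ((N : ℝ≥0∞) / N) := by rw [mul_div_assoc]
      _ = ε := by rw [ENNReal.div_self hN0 (ENNReal.natCast_ne_top N), mul_one]
  have hinv1 : ∀ y, φ y = 0 → φ (T y) = 0 := by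
    intro y h0
    apply haux2
    intro ε hε hεt a
    have hε2 : 0 < ε / 2 := ENNReal.half_pos hε.ne'
    obtain ⟨N, hNa, _, hlt⟩ := haux1 y h0 (ε / 2) hε2 (a + 2)
    obtain ⟨m, rfl⟩ : ∃ m, N = m + 1 := ⟨N - 1, by omega⟩
    refine ⟨m, by omega, by omega, ?_⟩
    have hSm : SS E T m (T y) ≤ SS E T (m + 1) y := by
      rw [SS_succ']; exact le_add_self
    have hc1 : ((m + 1 : ℕ) : ℝ≥0∞) ≤ 2 * m := by
      have h : (m + 1 : ℕ) ≤ 2 * m := by omega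
      exact_mod_cast h
    calc SS E T m (T y) ≤ SS E T (m + 1) y := hSm
      _ ≤ ε / 2 * ((m + 1 : ℕ) : ℝ≥0∞) := hlt.le
      _ ≤ ε / 2 * (2 * m) := mul_le_mul_right hc1 _
      _ = ε * m := by rw [← mul_assoc, ENNReal.div_mul_cancel (by norm_num) (by norm_num)]
  have hinv2 : ∀ y, φ (T y) = 0 → φ y = 0 := by
    intro y h0
    apply haux2
    intro ε hε hεt a
    have hε2 : 0 < ε / 2 := ENNReal.half_pos hε.ne'
    have hε2t : ε / 2 ≠ ⊤ := ne_top_of_le_ne_top hεt ENNReal.half_le_self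
    obtain ⟨M₀, hM₀⟩ := ENNReal.exists_nat_gt (ENNReal.inv_ne_top.2 hε2.ne')
    have hone : (1 : ℝ≥0∞) ≤ ε / 2 * M₀ := by
      calc (1 : ℝ≥0∞) = ε / 2 * (ε / 2)⁻¹ := (ENNReal.mul_inv_cancel hε2.ne' hε2t).symm
        _ ≤ ε / 2 * M₀ := mul_le_mul_right hM₀.le _
    obtain ⟨m, hma, hm1, hlt⟩ := haux1 (T y) h0 (ε / 2) hε2 (max a M₀)
    refine ⟨m + 1, by omega, by omega, ?_⟩
    have hMm : (M₀ : ℝ≥0∞) ≤ m := by exact_mod_cast le_trans (le_max_right a M₀) hma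
    have hc2 : ((m + 1 : ℕ) : ℝ≥0∞) = (m : ℝ≥0∞) + 1 := by push_cast; ring
    rw [hc2]
    calc SS E T (m + 1) y = E.indicator 1 y + SS E T m (T y) := SS_succ' E T m y
      _ ≤ 1 + ε / 2 * m := add_le_add (ind_le_one E y) hlt.le
      _ ≤ ε / 2 * M₀ + ε / 2 * m := add_le_add hone le_rfl
      _ ≤ ε / 2 * m + ε / 2 * m := add_le_add (mul_le_mul_right hMm _) le_rfl
      _ = ε * m := by rw [← add_mul, ENNReal.add_halves]
      _ ≤ ε * ((m : ℝ≥0∞) + 1) := mul_le_mul_right le_self_add ε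
  set Z : Set Ω := {y | φ y = 0} with hZdef
  have hZm : MeasurableSet Z := hφm (measurableSet_singleton 0)
  have hZinv : T ⁻¹' Z = Z := Set.ext fun y => ⟨fun h => hinv2 y h, fun h => hinv1 y h⟩
  rcases hT.toPreErgodic.measure_self_or_compl_eq_zero hZm hZinv with hZ0 | hZc
  · have h := measure_eq_zero_iff_ae_notMem.1 hZ0
    filter_upwards [h] with y hy
    exact pos_iff_ne_zero.2 hy
  · exfalso
    have hμEt : μ E ≠ ⊤ := measure_ne_top μ E
    set ε : ℝ≥0∞ := μ E / 4 with hεdef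
    have hε0 : 0 < ε := ENNReal.div_pos hE.ne' (by norm_num)
    have hεt : ε ≠ ⊤ := (ENNReal.div_lt_top hμEt (by norm_num)).ne
    set Good : ℕ → Set Ω := fun M => ⋃ m ∈ Finset.Icc 1 M, {z | SS E T m z < ε * m}
      with hGooddef
    have hGm : ∀ M, MeasurableSet (Good M) := by
      intro M
      refine Finset.measurableSet_biUnion _ fun m _ => ?_
      exact measurableSet_lt (measurable_SS hTm hEm m) measurable_const
    have hGmono : Monotone Good := fun M M' h =>
      Set.biUnion_subset_biUnion_left (by simpa using Set.Icc_subset_Icc_right h)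
    have hZG : Z ⊆ ⋃ M, Good M := by
      intro z hz
      obtain ⟨N, _, hN1, hlt⟩ := haux1 z hz ε hε0 0
      exact Set.mem_iUnion.2 ⟨N, Set.mem_iUnion₂.2 ⟨N, Finset.mem_Icc.2 (by omega), hlt⟩⟩
    have hlim : Tendsto (fun M => μ (Good M)ᶜ) atTop (𝓝 (μ (⋂ M, (Good M)ᶜ))) := by
      refine tendsto_measure_iInter_atTop (fun M => (hGm M).compl.nullMeasurableSet)
        (fun M M' h => Set.compl_subset_compl.2 (hGmono h)) ⟨0, measure_ne_top μ _⟩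
    have hcap0 : μ (⋂ M, (Good M)ᶜ) = 0 := by
      have h1 : (⋂ M, (Good M)ᶜ) ⊆ Zᶜ := by
        rw [← Set.compl_iUnion]
        exact Set.compl_subset_compl.2 hZG
      exact le_antisymm (le_trans (measure_mono h1) hZc.le) zero_le
    rw [hcap0] at hlim
    obtain ⟨M, hMε, hM1⟩ :=
      ((hlim.eventually_lt_const hε0).and (eventually_ge_atTop 1)).exists
    -- the block-length function
    set len : Ω → ℕ :=
      fun z => max 1 (min M (sInf {m | 1 ≤ m ∧ m ≤ M ∧ SS E T m z < ε * m})) with hlendef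
    have hlen1 : ∀ z, 1 ≤ len z := fun z => le_max_left _ _
    have hlenM : ∀ z, len z ≤ M := by
      intro z
      simp only [hlendef]
      exact max_le hM1 (min_le_left _ _)
    have hblock : ∀ z, SS E T (len z) z ≤ ε * (len z) + SS (Good M)ᶜ T 1 z := by
      intro z
      by_cases hz : z ∈ Good M
      · have hne : {m | 1 ≤ m ∧ m ≤ M ∧ SS E T m z < ε * m}.Nonempty := by
          obtain ⟨m, hm, hzm⟩ := Set.mem_iUnion₂.1 hz
          rw [Finset.mem_Icc] at hm
          exact ⟨m, hm.1, hm.2, hzm⟩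
        have hmem := Nat.sInf_mem hne
        have hlz : len z = sInf {m | 1 ≤ m ∧ m ≤ M ∧ SS E T m z < ε * m} := by
          simp only [hlendef]
          have h1 := hmem.1
          have h2 := hmem.2.1
          omega
        rw [hlz]
        exact le_trans hmem.2.2.le le_self_add
      · have hlz : len z = 1 := by
          simp only [hlendef]
          have hemp : {m | 1 ≤ m ∧ m ≤ M ∧ SS E T m z < ε * m} = ∅ := by
            ext m
            simp only [Set.mem_setOf_eq, Set.mem_empty_iff_false, iff_false]
            rintro ⟨h1, h2, h3⟩
            exact hz (Set.mem_iUnion₂.2 ⟨m, Finset.mem_Icc.2 ⟨h1, h2⟩, h3⟩)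
          rw [hemp, Nat.sInf_empty]
          omega
        rw [hlz]
        have h1 : SS E T 1 z ≤ 1 := by rw [SS_one]; exact ind_le_one E z
        have h2 : SS (Good M)ᶜ T 1 z = 1 := by
          rw [SS_one, Set.indicator_of_mem (Set.mem_compl hz)]
          rfl
        rw [h2]
        exact le_trans h1 le_add_self
    have hfin := KW_bound hT.toMeasurePreserving hEm (hGm M).compl ε M len
      hlen1 hlenM hblock (M + 1)
    have hbad : ((M + 1 + M : ℕ) : ℝ≥0∞) * μ (Good M)ᶜ ≤ ((M + 1 + M : ℕ) : ℝ≥0∞) * ε :=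
      mul_le_mul_right hMε.le _
    have hfin2 : ((M + 1 : ℕ) : ℝ≥0∞) * μ E ≤
        ε * ((M + 1 + M : ℕ) : ℝ≥0∞) + ((M + 1 + M : ℕ) : ℝ≥0∞) * ε :=
      le_trans hfin (add_le_add le_rfl hbad)
    have htR : ((M + 1 : ℕ) : ℝ) * (μ E).toReal ≤
        (μ E).toReal / 4 * ((M + 1 + M : ℕ) : ℝ) +
          ((M + 1 + M : ℕ) : ℝ) * ((μ E).toReal / 4) := by
      have hRHSne : ε * ((M + 1 + M : ℕ) : ℝ≥0∞) + ((M + 1 + M : ℕ) : ℝ≥0∞) * ε ≠ ⊤ := by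
        refine ENNReal.add_ne_top.2 ⟨?_, ?_⟩
        · exact ENNReal.mul_ne_top hεt (ENNReal.natCast_ne_top _)
        · exact ENNReal.mul_ne_top (ENNReal.natCast_ne_top _) hεt
      have h := ENNReal.toReal_mono hRHSne hfin2
      rw [ENNReal.toReal_add (ENNReal.mul_ne_top hεt (ENNReal.natCast_ne_top _))
        (ENNReal.mul_ne_top (ENNReal.natCast_ne_top _) hεt)] at h
      rw [ENNReal.toReal_mul, ENNReal.toReal_mul, ENNReal.toReal_mul] at h
      rw [hεdef, ENNReal.toReal_div] at h
      simp only [ENNReal.toReal_natCast] at h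
      simpa using h
    have haR : 0 < (μ E).toReal := ENNReal.toReal_pos hE.ne' hμEt
    have hMR : (0 : ℝ) ≤ (M : ℝ) := Nat.cast_nonneg M
    push_cast at htR
    nlinarith [haR, hMR]

end ZMAux

namespace ZM

section MainAux

open Filter

variable {A : Type*} [MeasurableSpace A]

lemma shift_iterate (x : ℕ → A) (r : ℕ) (j : ℕ) : (shift^[r] x) j = x (j + r) := by
  induction r generalizing x j with
  | zero => rfl
  | succ r ih =>
    rw [Function.iterate_succ_apply, ih (shift x) j]
    rfl

lemma zmPos_succ (N : ℕ) (x y : ℕ → A) (j : ℕ) :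
    zmPos N x y (j + 1) = zmPos N x y j + zmLen N x y (zmPos N x y j) := rfl

lemma zmPos_lt_succ (N : ℕ) (x y : ℕ → A) (j : ℕ) :
    zmPos N x y j + 1 ≤ zmPos N x y (j + 1) := by
  rw [zmPos_succ]
  have h : 1 ≤ zmLen N x y (zmPos N x y j) := le_max_left _ _
  omega

lemma zmPos_mono (N : ℕ) (x y : ℕ → A) : Monotone (zmPos N x y) :=
  monotone_nat_of_le_succ fun j => le_trans (by omega) (zmPos_lt_succ N x y j)

lemma zmPos_ge (N : ℕ) (x y : ℕ → A) (j : ℕ) : j ≤ zmPos N x y j := by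
  induction j with
  | zero => exact Nat.zero_le _
  | succ j ih => have := zmPos_lt_succ N x y j; omega

lemma cN_le (N : ℕ) (x y : ℕ → A) : cN N x y ≤ N :=
  Nat.sInf_le (zmPos_ge N x y N)

lemma le_zmPos_cN (N : ℕ) (x y : ℕ → A) : N ≤ zmPos N x y (cN N x y) :=
  Nat.sInf_mem (⟨N, zmPos_ge N x y N⟩ : {c | N ≤ zmPos N x y c}.Nonempty)

end MainAux

end ZM

namespace ZM

/-- If `ℚ` is ergodic and some word has positive `ℚ`-measure but zero `ℙ`-measure, then for
`ℚ`-almost every `y` and every `x ∈ supp ℙ`, `liminf c_N(y|x)/N > 0`, and hence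
`Q̂_N(y,x) → ∞`. -/
theorem estimator_diverges {A : Type*} [Fintype A] [MeasurableSpace A]
    (μP μQ : Measure (ℕ → A)) [IsProbabilityMeasure μP] [IsProbabilityMeasure μQ]
    (hPstat : MeasurePreserving shift μP μP)
    (hQerg : Ergodic shift μQ)
    (k : ℕ) (a : Fin k → A) (hQa : 0 < μQ (cyl a)) (hPa : μP (cyl a) = 0) :
    ∀ᵐ y ∂μQ, ∀ x ∈ suppSet μP,
      0 < atTop.liminf (fun N => (cN N x y : ℝ) / N) ∧
      Tendsto (fun N => ZMest N x y) atTop atTop := by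
  classical
  -- `k ≥ 1`
  have hk1 : 1 ≤ k := by
    by_contra h
    have hk0 : k = 0 := by omega
    subst hk0
    have : cyl a = Set.univ := Set.eq_univ_of_forall fun x i => i.elim0
    rw [this] at hPa
    simp at hPa
  -- the atoms of the letters of `a`
  set b : Fin k → Set A := fun i => ⋂₀ {U : Set A | MeasurableSet U ∧ a i ∈ U} with hbdef
  have hbm : ∀ i, MeasurableSet (b i) :=
    fun i => MeasurableSet.sInter ((Set.toFinite _).countable) fun U hU => hU.1
  have hab : ∀ i, a i ∈ b i := fun i U hU => hU.2
  have hbU : ∀ (i) (w : A), w ∈ b i → ∀ U : Set A, MeasurableSet U → (a i ∈ U ↔ w ∈ U) := by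
    intro i w hw U hU
    constructor
    · intro haU; exact hw U ⟨hU, haU⟩
    · intro hwU; by_contra haU
      exact hw Uᶜ ⟨hU.compl, haU⟩ hwU
  -- the measurable cylinder of atoms
  set E : Set (ℕ → A) := ⋂ i : Fin k, (fun x : ℕ → A => x (i : ℕ)) ⁻¹' (b i) with hEdef
  have hEm : MeasurableSet E :=
    MeasurableSet.iInter fun i => (measurable_pi_apply _) (hbm i)
  have hEiff : ∀ x : ℕ → A, x ∈ E ↔ ∀ i : Fin k, x (i : ℕ) ∈ b i := by
    intro x
    simp only [hEdef, Set.mem_iInter, Set.mem_preimage]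
  -- the product σ-algebra cannot separate within atoms
  have hsat : ∀ Mset : Set (ℕ → A), MeasurableSet Mset → ∀ x z : ℕ → A,
      (∀ (j : ℕ) (U : Set A), MeasurableSet U → (x j ∈ U ↔ z j ∈ U)) →
      x ∈ Mset → z ∈ Mset := by
    intro Mset hM
    let m' : MeasurableSpace (ℕ → A) :=
      { MeasurableSet' := fun S => ∀ x z : ℕ → A,
          (∀ (j : ℕ) (U : Set A), MeasurableSet U → (x j ∈ U ↔ z j ∈ U)) → (x ∈ S ↔ z ∈ S)
        measurableSet_empty := fun x z _ => Iff.rfl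
        measurableSet_compl := fun S hS x z h => not_congr (hS x z h)
        measurableSet_iUnion := fun f hf x z h => by
          simp only [Set.mem_iUnion]
          exact exists_congr fun i => hf i x z h }
    have hle : (MeasurableSpace.pi : MeasurableSpace (ℕ → A)) ≤ m' := by
      refine iSup_le fun j => ?_
      intro S hS
      obtain ⟨U, hU, rfl⟩ := hS
      intro x z h
      exact h j U hU
    exact fun x z h hx => (hle Mset hM x z h).1 hx
  -- `μP E = 0`
  have hPE : μP E = 0 := by
    have hsub : E ⊆ toMeasurable μP (cyl a) := by
      intro z hz
      set x : ℕ → A := fun j => if h : j < k then a ⟨j, h⟩ else z j with hxdef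
      have hx : x ∈ cyl a := by
        intro i
        simp only [hxdef]
        rw [dif_pos i.isLt]
      refine hsat _ (measurableSet_toMeasurable _ _) x z ?_
        (subset_toMeasurable _ _ hx)
      intro j U hU
      by_cases hj : j < k
      · have hzj : z j ∈ b ⟨j, hj⟩ := (hEiff z).1 hz ⟨j, hj⟩
        have h := hbU ⟨j, hj⟩ (z j) hzj U hU
        have hxj : x j = a ⟨j, hj⟩ := by simp only [hxdef]; rw [dif_pos hj]
        rw [hxj]
        exact h
      · have hxj : x j = z j := by simp only [hxdef]; rw [dif_neg hj]
        rw [hxj]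
    refine le_antisymm ?_ zero_le
    calc μP E ≤ μP (toMeasurable μP (cyl a)) := measure_mono hsub
      _ = μP (cyl a) := measure_toMeasurable _
      _ = 0 := hPa
  -- `μQ E > 0`
  have hQE : 0 < μQ E := by
    refine lt_of_lt_of_le hQa (measure_mono ?_)
    intro x hx
    rw [hEiff]
    intro i
    rw [hx i]
    exact hab i
  -- points in the support of `μP` never visit `E` along the shift orbit
  have havoid : ∀ x ∈ suppSet μP, ∀ r : ℕ, shift^[r] x ∉ E := by
    intro x hx r hmem
    have hn := hx (r + k)
    have hsub : cyl (seg x 0 (r + k)) ⊆ shift^[r] ⁻¹' E := by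
      intro z hz
      rw [Set.mem_preimage, hEiff]
      intro i
      rw [shift_iterate]
      have hik : (i : ℕ) + r < r + k := by have := i.isLt; omega
      have h2 : z ((i : ℕ) + r) = x ((i : ℕ) + r) := by
        have h := hz ⟨(i : ℕ) + r, hik⟩
        simpa [seg] using h
      rw [h2]
      have h3 := (hEiff _).1 hmem i
      rw [shift_iterate] at h3
      exact h3
    have hpre : μP (shift^[r] ⁻¹' E) = 0 := by
      rw [(hPstat.iterate r).measure_preimage hEm.nullMeasurableSet]
      exact hPE
    have := lt_of_lt_of_le hn (measure_mono hsub)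
    rw [hpre] at this
    exact lt_irrefl _ this
  -- the key combinatorial bound : occurrences are trapped near parsing boundaries
  have hkeyocc : ∀ x, (∀ r : ℕ, shift^[r] x ∉ E) → ∀ (y : ℕ → A) (N q j : ℕ),
      zmPos N x y j ≤ q → q < zmPos N x y (j + 1) → q < N → shift^[q] y ∈ E →
      zmPos N x y (j + 1) ≤ q + k := by
    intro x hxav y N q j hjq hqj hqN hocc
    by_contra hcon
    push_neg at hcon
    set p := zmPos N x y j with hpdef
    set L := zmLen N x y p with hLdef
    have hpL : zmPos N x y (j + 1) = p + L := rfl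
    rw [hpL] at hqj hcon
    set Sset := {ℓ | p + ℓ ≤ N ∧ appears N x (seg y p ℓ)} with hSdef
    have hS0 : 0 ∈ Sset := ⟨by omega, ⟨0, by omega, fun i => i.elim0⟩⟩
    have hSbdd : BddAbove Sset := ⟨N, fun ℓ hℓ => by have := hℓ.1; omega⟩
    have hL2 : 2 ≤ L := by omega
    have hLsup : L = sSup Sset := by
      have h : L = max 1 (sSup Sset) := rfl
      rcases max_cases 1 (sSup Sset) with ⟨h1, h2⟩ | ⟨h1, h2⟩ <;> omega
    have hLS : L ∈ Sset := hLsup ▸ Nat.sSup_mem ⟨0, hS0⟩ hSbdd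
    obtain ⟨r, hrN, hmatch⟩ := hLS.2
    apply hxav (r + (q - p))
    rw [hEiff]
    intro i
    rw [shift_iterate]
    have hidx : (q - p) + (i : ℕ) < L := by have := i.isLt; omega
    have hm := hmatch ⟨(q - p) + (i : ℕ), hidx⟩
    simp only [seg] at hm
    have hocc' := (hEiff _).1 hocc i
    rw [shift_iterate] at hocc'
    have he1 : (i : ℕ) + (r + (q - p)) = r + ((q - p) + (i : ℕ)) := by omega
    have he2 : p + ((q - p) + (i : ℕ)) = (i : ℕ) + q := by omega
    rw [he1, hm, he2]
    exact hocc'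
  -- counting occurrences
  have hcount : ∀ x, (∀ r : ℕ, shift^[r] x ∉ E) → ∀ (y : ℕ → A) (N : ℕ),
      ((Finset.range N).filter fun q => shift^[q] y ∈ E).card ≤ k * cN N x y := by
    intro x hxav y N
    have hsub : (Finset.range N).filter (fun q => shift^[q] y ∈ E) ⊆
        (Finset.range (cN N x y)).biUnion
          (fun j => Finset.Ico (zmPos N x y (j + 1) - k) (zmPos N x y (j + 1))) := by
      intro q hq
      simp only [Finset.mem_filter, Finset.mem_range] at hq
      obtain ⟨hqN, hocc⟩ := hq
      have hJne : {j | q < zmPos N x y (j + 1)}.Nonempty :=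
        ⟨q, lt_of_lt_of_le (Nat.lt_succ_self q) (zmPos_ge N x y (q + 1))⟩
      obtain ⟨J, hJmem, hJmin⟩ : ∃ J, q < zmPos N x y (J + 1) ∧
          ∀ j < J, ¬ q < zmPos N x y (j + 1) :=
        ⟨sInf {j | q < zmPos N x y (j + 1)}, Nat.sInf_mem hJne,
          fun j hj => Nat.notMem_of_lt_sInf (s := {j | q < zmPos N x y (j + 1)}) hj⟩
      have hJlow : zmPos N x y J ≤ q := by
        rcases Nat.eq_zero_or_pos J with h0 | hpos
        · rw [h0]; exact Nat.zero_le q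
        · have h := hJmin (J - 1) (by omega)
          push_neg at h
          have hJJ : J - 1 + 1 = J := by omega
          rw [hJJ] at h
          exact h
      have hJcN : J < cN N x y := by
        by_contra h
        push_neg at h
        have h1 : N ≤ zmPos N x y J :=
          le_trans (le_zmPos_cN N x y) (zmPos_mono N x y h)
        omega
      have hle := hkeyocc x hxav y N q J hJlow hJmem hqN hocc
      simp only [Finset.mem_biUnion, Finset.mem_range, Finset.mem_Ico]
      exact ⟨J, hJcN, by omega, hJmem⟩
    calc ((Finset.range N).filter fun q => shift^[q] y ∈ E).card
        ≤ ((Finset.range (cN N x y)).biUnion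
            (fun j => Finset.Ico (zmPos N x y (j + 1) - k) (zmPos N x y (j + 1)))).card :=
          Finset.card_le_card hsub
      _ ≤ ∑ j ∈ Finset.range (cN N x y),
            (Finset.Ico (zmPos N x y (j + 1) - k) (zmPos N x y (j + 1))).card :=
          Finset.card_biUnion_le
      _ ≤ ∑ _j ∈ Finset.range (cN N x y), k := by
          refine Finset.sum_le_sum fun j _ => ?_
          rw [Nat.card_Ico]
          omega
      _ = k * cN N x y := by
          rw [Finset.sum_const, Finset.card_range, smul_eq_mul, mul_comm]
  -- relate `SS` to the occurrence count
  have hSScard : ∀ (y : ℕ → A) (N : ℕ), ZMAux.SS E shift N y =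
      (((Finset.range N).filter fun q => shift^[q] y ∈ E).card : ℝ≥0∞) := by
    intro y N
    unfold ZMAux.SS
    rw [← Finset.sum_boole]
    refine Finset.sum_congr rfl fun p _ => ?_
    simp [Set.indicator_apply]
  -- conclusion, using the ergodic density lemma
  have hdensity := ZMAux.ergodic_density hQerg hEm hQE
  filter_upwards [hdensity] with y hy
  intro x hx
  have hxav := havoid x hx
  set u : ℕ → ℝ≥0∞ := fun N => ZMAux.SS E shift N y / N with hudef
  have hδpos : 0 < atTop.liminf u := hy
  have hδle : atTop.liminf u ≤ 1 := by
    have hle : ∀ N, u N ≤ 1 := by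
      intro N
      rcases Nat.eq_zero_or_pos N with h0 | hN
      · simp [hudef, h0, ZMAux.SS]
      · refine le_trans (ENNReal.div_le_div_right (ZMAux.SS_le E shift N y) _) ?_
        exact ENNReal.div_self_le_one
    calc atTop.liminf u ≤ atTop.liminf (fun _ => (1 : ℝ≥0∞)) :=
          liminf_le_liminf (Eventually.of_forall hle)
      _ = 1 := liminf_const 1
  set δ : ℝ≥0∞ := atTop.liminf u with hδdef
  have hδt : δ ≠ ⊤ := ne_top_of_le_ne_top ENNReal.one_ne_top hδle
  have hhalf : δ / 2 < δ := ENNReal.half_lt_self hδpos.ne' hδt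
  have hev : ∀ᶠ N in atTop, δ / 2 < u N := eventually_lt_of_lt_liminf hhalf
  have hε0 : 0 < δ / 2 := ENNReal.half_pos hδpos.ne'
  have hεt : δ / 2 ≠ ⊤ := ne_top_of_le_ne_top hδt ENNReal.half_le_self
  set c : ℝ := (δ / 2).toReal / k with hcdef
  have hc : 0 < c := by
    refine div_pos (ENNReal.toReal_pos hε0.ne' hεt) ?_
    exact_mod_cast hk1
  have hlb : ∀ᶠ N in atTop, c * N ≤ (cN N x y : ℝ) := by
    filter_upwards [hev, eventually_ge_atTop 1] with N hN hN1
    have hN0 : (N : ℝ≥0∞) ≠ 0 := by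
      simp only [ne_eq, Nat.cast_eq_zero]
      omega
    have h1 : δ / 2 * N ≤ ZMAux.SS E shift N y := ENNReal.mul_le_of_le_div hN.le
    rw [hSScard y N] at h1
    have h2 : (δ / 2).toReal * N ≤
        ((((Finset.range N).filter fun q => shift^[q] y ∈ E).card : ℕ) : ℝ) := by
      have h := ENNReal.toReal_mono (ENNReal.natCast_ne_top _) h1
      rw [ENNReal.toReal_mul] at h
      simpa using h
    have h3 := hcount x hxav y N
    have h3R : ((((Finset.range N).filter fun q => shift^[q] y ∈ E).card : ℕ) : ℝ) ≤
        (k : ℝ) * (cN N x y : ℝ) := by exact_mod_cast h3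
    have hkR : (0 : ℝ) < (k : ℝ) := by exact_mod_cast hk1
    rw [hcdef, div_mul_eq_mul_div, div_le_iff₀ hkR]
    calc (δ / 2).toReal * N ≤ (k : ℝ) * (cN N x y : ℝ) := le_trans h2 h3R
      _ = (cN N x y : ℝ) * k := by ring
  constructor
  · -- the liminf is positive
    have hub : ∀ᶠ N in atTop, c ≤ (cN N x y : ℝ) / N := by
      filter_upwards [hlb, eventually_ge_atTop 1] with N h1 hN1
      have hNpos : (0 : ℝ) < N := by exact_mod_cast hN1
      rw [le_div_iff₀ hNpos]
      exact h1
    have hbdd : IsBoundedUnder (· ≤ ·) atTop (fun N => (cN N x y : ℝ) / N) := by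
      refine isBoundedUnder_of ⟨1, fun N => ?_⟩
      rcases Nat.eq_zero_or_pos N with h0 | hN
      · simp [h0]
      · have hNpos : (0 : ℝ) < N := by exact_mod_cast hN
        rw [div_le_one hNpos]
        exact_mod_cast cN_le N x y
    calc (0 : ℝ) < c := hc
      _ ≤ atTop.liminf (fun N => (cN N x y : ℝ) / N) :=
        le_liminf_of_le hbdd.isCoboundedUnder_ge hub
  · -- the estimator diverges
    have hmono : ∀ᶠ N : ℕ in atTop, c * Real.log N ≤ ZMest N x y := by
      filter_upwards [hlb, eventually_ge_atTop 1] with N h1 hN1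
      have hNpos : (0 : ℝ) < N := by exact_mod_cast hN1
      have hlogN : 0 ≤ Real.log N := Real.log_nonneg (by exact_mod_cast hN1)
      unfold ZMest
      rw [show c * Real.log N = c * N * Real.log N / N by field_simp]
      apply (div_le_div_iff_of_pos_right hNpos).2
      exact mul_le_mul_of_nonneg_right h1 hlogN
    refine tendsto_atTop_mono' atTop hmono ?_
    exact (Real.tendsto_log_atTop.comp tendsto_natCast_atTop_atTop).const_mul_atTop hc

end ZM
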